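/- Let h : ℝ^m → ℝ be continuously differentiable such that for all y, z ∈ ℝ^m, ‖∇h(y) − ∇h(z)‖ ≤ L‖y − z‖ and ⟨∇h(y) − ∇h(z), y − z⟩ ≥ μ‖y − z‖², where 0 < μ < L. Then for all x, y ∈ ℝ^m: h(x) ≥ h(y) + ⟨∇h(y), x − y⟩ + (1/(2(1 − μ/L)))·((1/L)‖∇h(x) − ∇h(y)‖² + μ‖x − y‖² − 2(μ/L)⟨∇h(y) − ∇h(x), y − x⟩). -/

import Mathlib

open scoped RealInnerProductSpace

section aux
variable {m : ℕ}

private lemma hasDerivAt_line (h : EuclideanSpace ℝ (Fin m) → ℝ) (hh : ContDiff ℝ 1 h)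
    (y u : EuclideanSpace ℝ (Fin m)) (t : ℝ) :
    HasDerivAt (fun s : ℝ => h (y + s • u)) ⟪gradient h (y + t • u), u⟫ t := by
  have hz := ((hh.differentiable one_ne_zero) (y + t • u)).hasGradientAt
  have hf := hz.hasFDerivAt
  have hline : HasDerivAt (fun s : ℝ => y + s • u) u t := by
    simpa using ((hasDerivAt_id t).smul_const u).const_add y
  have := hf.comp_hasDerivAt t hline
  simp [InnerProductSpace.toDual_apply_apply] at this ⊢
  exact this
end aux

section aux2
variable {m : ℕ}

private lemma lower_bound (μ : ℝ) (h : EuclideanSpace ℝ (Fin m) → ℝ) (hh : ContDiff ℝ 1 h)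
    (hSC : ∀ y z : EuclideanSpace ℝ (Fin m),
      ⟪gradient h y - gradient h z, y - z⟫ ≥ μ * ‖y - z‖ ^ 2)
    (x y : EuclideanSpace ℝ (Fin m)) :
    h x ≥ h y + ⟪gradient h y, x - y⟫ + μ / 2 * ‖x - y‖ ^ 2 := by
  set u := x - y with hu
  set ψ : ℝ → ℝ := fun t => h (y + t • u) - t * ⟪gradient h y, u⟫ - μ * ‖u‖ ^ 2 * t ^ 2 / 2
    with hψdef
  have hψ : ∀ t : ℝ, HasDerivAt ψ
      (⟪gradient h (y + t • u), u⟫ - ⟪gradient h y, u⟫ - μ * ‖u‖ ^ 2 * t) t := by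
    intro t
    have h1 := hasDerivAt_line h hh y u t
    have h2 : HasDerivAt (fun s : ℝ => s * ⟪gradient h y, u⟫) ⟪gradient h y, u⟫ t := by
      simpa using (hasDerivAt_id t).mul_const (⟪gradient h y, u⟫)
    have h3 : HasDerivAt (fun s : ℝ => μ * ‖u‖ ^ 2 * s ^ 2 / 2) (μ * ‖u‖ ^ 2 * t) t := by
      have := ((hasDerivAt_pow 2 t).const_mul (μ * ‖u‖ ^ 2)).div_const 2
      exact this.congr_deriv (by ring)
    exact (h1.sub h2).sub h3
  have hmono : MonotoneOn ψ (Set.Icc 0 1) := by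
    apply monotoneOn_of_deriv_nonneg (convex_Icc 0 1)
    · exact (fun t _ => ((hψ t).differentiableAt).continuousAt.continuousWithinAt)
    · exact fun t _ => ((hψ t).differentiableAt).differentiableWithinAt
    · intro t ht
      rw [interior_Icc] at ht
      rw [(hψ t).deriv]
      have hsc := hSC (y + t • u) y
      have he : y + t • u - y = t • u := by abel
      rw [he, real_inner_smul_right, inner_sub_left] at hsc
      have hn : ‖t • u‖ ^ 2 = t ^ 2 * ‖u‖ ^ 2 := by
        rw [norm_smul]; rw [Real.norm_eq_abs]; rw [mul_pow, sq_abs]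
      rw [hn] at hsc
      nlinarith [ht.1, hsc]
  have h01 := hmono (Set.mem_Icc.mpr ⟨le_refl 0, zero_le_one⟩)
    (Set.mem_Icc.mpr ⟨zero_le_one, le_refl 1⟩) zero_le_one
  have hψ0 : ψ 0 = h y := by simp [hψdef]
  have hψ1 : ψ 1 = h x - ⟪gradient h y, u⟫ - μ * ‖u‖ ^ 2 / 2 := by
    simp [hψdef, hu]
  rw [hψ0, hψ1] at h01
  linarith

private lemma upper_bound (L : ℝ) (h : EuclideanSpace ℝ (Fin m) → ℝ) (hh : ContDiff ℝ 1 h)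
    (hLip : ∀ y z : EuclideanSpace ℝ (Fin m),
      ‖gradient h y - gradient h z‖ ≤ L * ‖y - z‖)
    (x y : EuclideanSpace ℝ (Fin m)) :
    h x ≤ h y + ⟪gradient h y, x - y⟫ + L / 2 * ‖x - y‖ ^ 2 := by
  set u := x - y with hu
  set ψ : ℝ → ℝ := fun t => t * ⟪gradient h y, u⟫ + L * ‖u‖ ^ 2 * t ^ 2 / 2 - h (y + t • u)
    with hψdef
  have hψ : ∀ t : ℝ, HasDerivAt ψ
      (⟪gradient h y, u⟫ + L * ‖u‖ ^ 2 * t - ⟪gradient h (y + t • u), u⟫) t := by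
    intro t
    have h1 := hasDerivAt_line h hh y u t
    have h2 : HasDerivAt (fun s : ℝ => s * ⟪gradient h y, u⟫) ⟪gradient h y, u⟫ t := by
      simpa using (hasDerivAt_id t).mul_const (⟪gradient h y, u⟫)
    have h3 : HasDerivAt (fun s : ℝ => L * ‖u‖ ^ 2 * s ^ 2 / 2) (L * ‖u‖ ^ 2 * t) t := by
      have := ((hasDerivAt_pow 2 t).const_mul (L * ‖u‖ ^ 2)).div_const 2
      exact this.congr_deriv (by ring)
    exact (h2.add h3).sub h1
  have hmono : MonotoneOn ψ (Set.Icc 0 1) := by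
    apply monotoneOn_of_deriv_nonneg (convex_Icc 0 1)
    · exact (fun t _ => ((hψ t).differentiableAt).continuousAt.continuousWithinAt)
    · exact fun t _ => ((hψ t).differentiableAt).differentiableWithinAt
    · intro t ht
      rw [interior_Icc] at ht
      rw [(hψ t).deriv]
      have hcs := real_inner_le_norm (gradient h (y + t • u) - gradient h y) u
      have hlip := hLip (y + t • u) y
      have he : y + t • u - y = t • u := by abel
      rw [he] at hlip
      have hn : ‖t • u‖ = t * ‖u‖ := by
        rw [norm_smul, Real.norm_eq_abs, abs_of_pos ht.1]
      rw [hn] at hlip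
      rw [inner_sub_left] at hcs
      nlinarith [norm_nonneg u, ht.1, mul_le_mul_of_nonneg_right hlip (norm_nonneg u)]
  have h01 := hmono (Set.mem_Icc.mpr ⟨le_refl 0, zero_le_one⟩)
    (Set.mem_Icc.mpr ⟨zero_le_one, le_refl 1⟩) zero_le_one
  have hψ0 : ψ 0 = - h y := by simp [hψdef]
  have hψ1 : ψ 1 = ⟪gradient h y, u⟫ + L * ‖u‖ ^ 2 / 2 - h x := by
    simp [hψdef, hu]
  rw [hψ0, hψ1] at h01
  linarith
end aux2

private lemma combine_real (μ L hx hy hz bu bd ad ud C N W D : ℝ) (hμ : 0 < μ) (hμL : μ < L)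
    (h1 : hz ≥ hy + (bu - (L - μ)⁻¹ * bd) +
      μ / 2 * (W - 2 * ((L - μ)⁻¹ * ud) + ((L - μ)⁻¹) ^ 2 * D))
    (h2 : hz ≤ hx + -((L - μ)⁻¹ * ad) + L / 2 * (((L - μ)⁻¹) ^ 2 * D))
    (eA : ad - bd = N - μ * C) (eB : ud = C - μ * W)
    (eC : D = N - 2 * (μ * C) + μ ^ 2 * W) :
    hx ≥ hy + bu + (1 / (2 * (1 - μ / L))) * ((1 / L) * N + μ * W - 2 * (μ / L) * C) := by
  have hL : 0 < L := hμ.trans hμL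
  have hLμ : (0:ℝ) < L - μ := by linarith
  have hLne : L ≠ 0 := ne_of_gt hL
  have hLμne : L - μ ≠ 0 := ne_of_gt hLμ
  have hone : (1:ℝ) - μ / L ≠ 0 := by
    have : μ / L < 1 := (div_lt_one hL).mpr hμL
    linarith
  have hcomb : hx ≥ hy + bu + (-((L - μ)⁻¹ * bd) + (L - μ)⁻¹ * ad +
      μ / 2 * (W - 2 * ((L - μ)⁻¹ * ud) + ((L - μ)⁻¹) ^ 2 * D) -
      L / 2 * (((L - μ)⁻¹) ^ 2 * D)) := by linarith
  have eA' : ad = bd + (N - μ * C) := by linarith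
  have hkey : -((L - μ)⁻¹ * bd) + (L - μ)⁻¹ * ad +
      μ / 2 * (W - 2 * ((L - μ)⁻¹ * ud) + ((L - μ)⁻¹) ^ 2 * D) -
      L / 2 * (((L - μ)⁻¹) ^ 2 * D)
      = (1 / (2 * (1 - μ / L))) * ((1 / L) * N + μ * W - 2 * (μ / L) * C) := by
    rw [eB, eC, eA']
    field_simp
    ring
  linarith

/-- **Interpolability inequality.** If `h : ℝᵐ → ℝ` is continuously differentiable with
`L`-Lipschitz and `μ`-strongly monotone gradient (`0 < μ < L`), then for all `x, y`:
`h(x) ≥ h(y) + ⟨∇h(y), x − y⟩ + (1/(2(1 − μ/L)))((1/L)‖∇h(x) − ∇h(y)‖² + μ‖x − y‖²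
− 2(μ/L)⟨∇h(y) − ∇h(x), y − x⟩)`. -/
theorem interpolability_inequality
    {m : ℕ} (μ L : ℝ) (hμ : 0 < μ) (hμL : μ < L)
    (h : EuclideanSpace ℝ (Fin m) → ℝ) (hh : ContDiff ℝ 1 h)
    (hLip : ∀ y z : EuclideanSpace ℝ (Fin m),
      ‖gradient h y - gradient h z‖ ≤ L * ‖y - z‖)
    (hSC : ∀ y z : EuclideanSpace ℝ (Fin m),
      ⟪gradient h y - gradient h z, y - z⟫ ≥ μ * ‖y - z‖ ^ 2) :
    ∀ x y : EuclideanSpace ℝ (Fin m),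
      h x ≥ h y + ⟪gradient h y, x - y⟫ + (1 / (2 * (1 - μ / L))) *
        ((1 / L) * ‖gradient h x - gradient h y‖ ^ 2 + μ * ‖x - y‖ ^ 2
          - 2 * (μ / L) * ⟪gradient h y - gradient h x, y - x⟫) := by
  intro x y
  set d := gradient h x - gradient h y - μ • (x - y) with hd
  set z := x - (L - μ)⁻¹ • d with hz
  have h1 := lower_bound μ h hh hSC z y
  have h2 := upper_bound L h hh hLip z x
  have r1 : z - y = (x - y) - (L - μ)⁻¹ • d := by rw [hz]; abel
  have r2 : z - x = -((L - μ)⁻¹ • d) := by rw [hz]; abel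
  have i1 : ⟪gradient h y, z - y⟫ = ⟪gradient h y, x - y⟫
      - (L - μ)⁻¹ * ⟪gradient h y, d⟫ := by
    rw [r1, inner_sub_right, real_inner_smul_right]
  have i2 : ⟪gradient h x, z - x⟫ = -((L - μ)⁻¹ * ⟪gradient h x, d⟫) := by
    rw [r2, inner_neg_right, real_inner_smul_right]
  have n1 : ‖z - y‖ ^ 2 = ‖x - y‖ ^ 2 - 2 * ((L - μ)⁻¹ * ⟪x - y, d⟫)
      + ((L - μ)⁻¹) ^ 2 * ‖d‖ ^ 2 := by
    rw [r1, norm_sub_sq_real, real_inner_smul_right, norm_smul, Real.norm_eq_abs,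
      mul_pow, sq_abs]
  have n2 : ‖z - x‖ ^ 2 = ((L - μ)⁻¹) ^ 2 * ‖d‖ ^ 2 := by
    rw [r2, norm_neg, norm_smul, Real.norm_eq_abs, mul_pow, sq_abs]
  rw [i1, n1] at h1
  rw [i2, n2] at h2
  have eA : ⟪gradient h x, d⟫ - ⟪gradient h y, d⟫
      = ‖gradient h x - gradient h y‖ ^ 2
        - μ * ⟪gradient h x - gradient h y, x - y⟫ := by
    rw [← inner_sub_left, hd, inner_sub_right, real_inner_smul_right,
      real_inner_self_eq_norm_sq]
  have eB : ⟪x - y, d⟫ = ⟪gradient h x - gradient h y, x - y⟫ - μ * ‖x - y‖ ^ 2 := by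
    rw [hd, inner_sub_right, real_inner_smul_right, real_inner_self_eq_norm_sq,
      real_inner_comm]
  have eC : ‖d‖ ^ 2 = ‖gradient h x - gradient h y‖ ^ 2
      - 2 * (μ * ⟪gradient h x - gradient h y, x - y⟫) + μ ^ 2 * ‖x - y‖ ^ 2 := by
    rw [hd, norm_sub_sq_real, real_inner_smul_right, norm_smul, Real.norm_eq_abs,
      mul_pow, sq_abs]
  have eG : ⟪gradient h y - gradient h x, y - x⟫
      = ⟪gradient h x - gradient h y, x - y⟫ := by
    rw [show gradient h y - gradient h x = -(gradient h x - gradient h y) from by abel,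
      show y - x = -(x - y) from by abel, inner_neg_neg]
  rw [eG]
  exact combine_real μ L (h x) (h y) (h z) _ _ _ _ _ _ _ _ hμ hμL h1 h2 eA eB eC
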